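/- Let $X_1,\dots,X_r$ be $r \ge 2$ matrices of distinct indeterminates, each of size $m \times n$, let $H$ be their horizontal concatenation (an $m \times rn$ matrix) and $V$ their vertical concatenation (an $rm \times n$ matrix). Then the toric double determinantal ideal $I = I_2(H) + I_2(V)$ is a prime ideal of the polynomial ring $R = k[x^{\ell}_{ij}]$ over a field $k$. -/

import Mathlib

open MvPolynomial Sum

noncomputable section TDDaux

namespace TDDaux

variable (k : Type*) [CommRing k] (r m n : ℕ)

/-- middle-coordinate swap binomials (the 2×2 minors of H). -/
def SH : Set (MvPolynomial (Fin r × Fin m × Fin n) k) :=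
  {p | ∃ l i j l' i' j', p = X (l,i,j) * X (l',i',j') - X (l,i',j) * X (l',i,j')}

/-- last-coordinate swap binomials (the 2×2 minors of V). -/
def SV : Set (MvPolynomial (Fin r × Fin m × Fin n) k) :=
  {p | ∃ l i j l' i' j', p = X (l,i,j) * X (l',i',j') - X (l,i,j') * X (l',i',j)}

def I0 : Ideal (MvPolynomial (Fin r × Fin m × Fin n) k) := Ideal.span (SH k r m n ∪ SV k r m n)

variable {k r m n}

lemma mk_swap_mid (l d : Fin r) (b i : Fin m) (c e : Fin n) :
    Ideal.Quotient.mk (I0 k r m n) (X (l,b,c) * X (d,i,e)) =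
      Ideal.Quotient.mk (I0 k r m n) (X (l,i,c) * X (d,b,e)) :=
  Ideal.Quotient.eq.mpr (Ideal.subset_span (Or.inl ⟨l, b, c, d, i, e, rfl⟩))

lemma mk_swap_last (l d : Fin r) (i e : Fin m) (c j : Fin n) :
    Ideal.Quotient.mk (I0 k r m n) (X (l,i,c) * X (d,e,j)) =
      Ideal.Quotient.mk (I0 k r m n) (X (l,i,j) * X (d,e,c)) :=
  Ideal.Quotient.eq.mpr (Ideal.subset_span (Or.inr ⟨l, i, c, d, e, j, rfl⟩))

variable (k) in
/-- image in the quotient of the product of the variables in a multiset. -/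
def qm (L : Multiset (Fin r × Fin m × Fin n)) : MvPolynomial (Fin r × Fin m × Fin n) k ⧸ I0 k r m n :=
  Ideal.Quotient.mk _ (L.map X).prod

lemma qm_cons (t : Fin r × Fin m × Fin n) (L : Multiset (Fin r × Fin m × Fin n)) :
    qm k (t ::ₘ L) = Ideal.Quotient.mk _ (X t) * qm k L := by
  simp [qm, Multiset.map_cons, Multiset.prod_cons]

/-- The combinatorial core: products of variables with the same three "column"
multisets agree modulo `I0`. -/
lemma connect : ∀ L' L : Multiset (Fin r × Fin m × Fin n),
    L.map (·.1) = L'.map (·.1) → L.map (·.2.1) = L'.map (·.2.1) →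
    L.map (·.2.2) = L'.map (·.2.2) → qm k L = qm k L' := by
  intro L'
  induction L' using Multiset.strongInductionOn with
  | _ L' IH =>
  intro L h1 h2 h3
  by_cases hL' : L' = 0
  · subst hL'
    rw [Multiset.map_eq_zero.mp h1]
  obtain ⟨t', ht'⟩ := Multiset.exists_mem_of_ne_zero hL'
  obtain ⟨l, i, j⟩ := t'
  -- Step 1: bring an element of the form (l, i, c) to the front, mod I0.
  have step1 : ∃ (c : Fin n) (K : Multiset (Fin r × Fin m × Fin n)),
      qm k L = qm k ((l,i,c) ::ₘ K) ∧
      ((l,i,c) ::ₘ K).map (·.1) = L.map (·.1) ∧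
      ((l,i,c) ::ₘ K).map (·.2.1) = L.map (·.2.1) ∧
      ((l,i,c) ::ₘ K).map (·.2.2) = L.map (·.2.2) := by
    by_cases hx : ∃ s ∈ L, s.1 = l ∧ s.2.1 = i
    · obtain ⟨s, hsL, ha, hb⟩ := hx
      have hs' : (l, i, s.2.2) ∈ L := by rw [← ha, ← hb]; exact hsL
      exact ⟨s.2.2, L.erase (l,i,s.2.2), by rw [Multiset.cons_erase hs'],
        by rw [Multiset.cons_erase hs'], by rw [Multiset.cons_erase hs'],
        by rw [Multiset.cons_erase hs']⟩
    · have hl : ∃ bc : Fin m × Fin n, (l, bc.1, bc.2) ∈ L := by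
        have : ((l,i,j) : Fin r × Fin m × Fin n).1 ∈ L.map (·.1) := by
          rw [h1]; exact Multiset.mem_map_of_mem _ ht'
        obtain ⟨s, hs, hsl⟩ := Multiset.mem_map.mp this
        have hsl' : s.1 = l := hsl
        exact ⟨(s.2.1, s.2.2), by rw [← hsl']; exact hs⟩
      have hi : ∃ df : Fin r × Fin n, (df.1, i, df.2) ∈ L := by
        have : ((l,i,j) : Fin r × Fin m × Fin n).2.1 ∈ L.map (·.2.1) := by
          rw [h2]; exact Multiset.mem_map_of_mem _ ht'
        obtain ⟨s, hs, hsl⟩ := Multiset.mem_map.mp this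
        have hsl' : s.2.1 = i := hsl
        exact ⟨(s.1, s.2.2), by rw [← hsl']; exact hs⟩
      obtain ⟨⟨b, c⟩, hs1⟩ := hl
      obtain ⟨⟨d, f⟩, hs2⟩ := hi
      have hne : ((d,i,f) : Fin r × Fin m × Fin n) ≠ (l,b,c) := by
        rintro h
        exact hx ⟨(d,i,f), hs2, by rw [h], rfl⟩
      have hs2' : ((d,i,f) : Fin r × Fin m × Fin n) ∈ L.erase (l,b,c) :=
        (Multiset.mem_erase_of_ne hne).mpr hs2
      set K0 := (L.erase (l,b,c)).erase (d,i,f) with hK0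
      have hL : L = (l,b,c) ::ₘ (d,i,f) ::ₘ K0 := by
        rw [hK0, Multiset.cons_erase hs2', Multiset.cons_erase hs1]
      clear_value K0
      refine ⟨c, (d,b,f) ::ₘ K0, ?_, ?_, ?_, ?_⟩
      · conv_lhs => rw [hL]
        rw [qm_cons, qm_cons, qm_cons, qm_cons, ← mul_assoc, ← mul_assoc,
          ← map_mul, ← map_mul, mk_swap_mid l d b i c f]
      · rw [hL]; simp [Multiset.map_cons]
      · rw [hL]; simp [Multiset.map_cons, Multiset.cons_swap]
      · rw [hL]; simp [Multiset.map_cons]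
  obtain ⟨c, K1, hq1, hc1, hc2, hc3⟩ := step1
  -- Step 2: fix the last coordinate, mod I0.
  have step2 : ∃ K : Multiset (Fin r × Fin m × Fin n),
      qm k L = qm k ((l,i,j) ::ₘ K) ∧
      ((l,i,j) ::ₘ K).map (·.1) = L.map (·.1) ∧
      ((l,i,j) ::ₘ K).map (·.2.1) = L.map (·.2.1) ∧
      ((l,i,j) ::ₘ K).map (·.2.2) = L.map (·.2.2) := by
    by_cases hcj : c = j
    · subst hcj; exact ⟨K1, hq1, hc1, hc2, hc3⟩
    · have hjmem : j ∈ (((l,i,c) ::ₘ K1).map (·.2.2)) := by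
        rw [hc3, h3]
        exact Multiset.mem_map_of_mem _ ht'
      rw [Multiset.map_cons] at hjmem
      rcases Multiset.mem_cons.mp hjmem with h | h
      · exact absurd h.symm hcj
      have hj : ∃ de : Fin r × Fin m, (de.1, de.2, j) ∈ K1 := by
        obtain ⟨s, hs, hsl⟩ := Multiset.mem_map.mp h
        have hsl' : s.2.2 = j := hsl
        exact ⟨(s.1, s.2.1), by rw [← hsl']; exact hs⟩
      obtain ⟨⟨d, e⟩, hs3⟩ := hj
      have hK1 : K1 = (d,e,j) ::ₘ K1.erase (d,e,j) := (Multiset.cons_erase hs3).symm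
      refine ⟨(d,e,c) ::ₘ K1.erase (d,e,j), ?_, ?_, ?_, ?_⟩
      · rw [hq1]
        conv_lhs => rw [hK1]
        rw [qm_cons, qm_cons, qm_cons, qm_cons, ← mul_assoc, ← mul_assoc,
          ← map_mul, ← map_mul, mk_swap_last l d i e c j]
      · rw [← hc1]; conv_rhs => rw [hK1]
        simp [Multiset.map_cons]
      · rw [← hc2]; conv_rhs => rw [hK1]
        simp [Multiset.map_cons]
      · rw [← hc3]; conv_rhs => rw [hK1]
        simp [Multiset.map_cons, Multiset.cons_swap]
  obtain ⟨K, hqK, k1, k2, k3⟩ := step2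
  have hL'e : L' = (l,i,j) ::ₘ L'.erase (l,i,j) := (Multiset.cons_erase ht').symm
  have e1 : K.map (·.1) = (L'.erase (l,i,j)).map (·.1) := by
    have := k1.trans h1
    rw [hL'e, Multiset.map_cons, Multiset.map_cons] at this
    exact (Multiset.cons_inj_right _).mp this
  have e2 : K.map (·.2.1) = (L'.erase (l,i,j)).map (·.2.1) := by
    have := k2.trans h2
    rw [hL'e, Multiset.map_cons, Multiset.map_cons] at this
    exact (Multiset.cons_inj_right _).mp this
  have e3 : K.map (·.2.2) = (L'.erase (l,i,j)).map (·.2.2) := by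
    have := k3.trans h3
    rw [hL'e, Multiset.map_cons, Multiset.map_cons] at this
    exact (Multiset.cons_inj_right _).mp this
  have hrec := IH (L'.erase (l,i,j)) (Multiset.erase_lt.mpr ht') K e1 e2 e3
  rw [hqK, qm_cons, hrec, ← qm_cons, ← hL'e]


variable (k r m n)

/-- The exponent map of the monomial map `x_{lij} ↦ u_l v_i w_j`. -/
def piH : ((Fin r × Fin m × Fin n) →₀ ℕ) →+ ((Fin r ⊕ Fin m ⊕ Fin n) →₀ ℕ) :=
  Finsupp.liftAddHom fun t =>
    Finsupp.singleAddHom (inl t.1) + Finsupp.singleAddHom (inr (inl t.2.1)) +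
      Finsupp.singleAddHom (inr (inr t.2.2))

variable {k r m n}

lemma piH_single (t : Fin r × Fin m × Fin n) (c : ℕ) :
    piH r m n (Finsupp.single t c) =
      Finsupp.single (inl t.1) c + Finsupp.single (inr (inl t.2.1)) c +
        Finsupp.single (inr (inr t.2.2)) c := by
  rw [piH, Finsupp.liftAddHom_apply_single]; rfl

lemma Pm_toMultiset (a : (Fin r × Fin m × Fin n) →₀ ℕ) :
    ((Finsupp.toMultiset a).map X).prod = (monomial a (1 : k)) := by
  induction a using Finsupp.induction with
  | zero => simp [monomial_zero', C_1]
  | single_add t c f ht hc ih =>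
    rw [Finsupp.toMultiset_add, Multiset.map_add, Multiset.prod_add, ih,
      Finsupp.toMultiset_single, Multiset.map_nsmul, Multiset.map_singleton,
      Multiset.prod_nsmul, Multiset.prod_singleton, X_pow_eq_monomial, monomial_mul, one_mul]

lemma count_col1 (a : (Fin r × Fin m × Fin n) →₀ ℕ) (x : Fin r) :
    ((Finsupp.toMultiset a).map (·.1)).count x = piH r m n a (inl x) := by
  induction a using Finsupp.induction with
  | zero => simp
  | single_add t c f ht hc ih =>
    rw [Finsupp.toMultiset_add, Multiset.map_add, Multiset.count_add, ih, map_add,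
      Finsupp.add_apply, Finsupp.toMultiset_single, Multiset.map_nsmul,
      Multiset.map_singleton, Multiset.count_nsmul, Multiset.count_singleton, piH_single]
    simp [Finsupp.single_apply, eq_comm]

lemma count_col2 (a : (Fin r × Fin m × Fin n) →₀ ℕ) (x : Fin m) :
    ((Finsupp.toMultiset a).map (·.2.1)).count x = piH r m n a (inr (inl x)) := by
  induction a using Finsupp.induction with
  | zero => simp
  | single_add t c f ht hc ih =>
    rw [Finsupp.toMultiset_add, Multiset.map_add, Multiset.count_add, ih, map_add,
      Finsupp.add_apply, Finsupp.toMultiset_single, Multiset.map_nsmul,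
      Multiset.map_singleton, Multiset.count_nsmul, Multiset.count_singleton, piH_single]
    simp [Finsupp.single_apply, eq_comm]

lemma count_col3 (a : (Fin r × Fin m × Fin n) →₀ ℕ) (x : Fin n) :
    ((Finsupp.toMultiset a).map (·.2.2)).count x = piH r m n a (inr (inr x)) := by
  induction a using Finsupp.induction with
  | zero => simp
  | single_add t c f ht hc ih =>
    rw [Finsupp.toMultiset_add, Multiset.map_add, Multiset.count_add, ih, map_add,
      Finsupp.add_apply, Finsupp.toMultiset_single, Multiset.map_nsmul,
      Multiset.map_singleton, Multiset.count_nsmul, Multiset.count_singleton, piH_single]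
    simp [Finsupp.single_apply, eq_comm]

/-- Two monomials with the same image under the exponent map are congruent mod I0. -/
lemma monomial_sub_mem {a a' : (Fin r × Fin m × Fin n) →₀ ℕ}
    (h : piH r m n a = piH r m n a') :
    (monomial a (1 : k)) - monomial a' 1 ∈ I0 k r m n := by
  have c1 : (Finsupp.toMultiset a).map (·.1) = (Finsupp.toMultiset a').map (·.1) :=
    Multiset.ext.mpr fun x => by rw [count_col1, count_col1, h]
  have c2 : (Finsupp.toMultiset a).map (·.2.1) = (Finsupp.toMultiset a').map (·.2.1) :=
    Multiset.ext.mpr fun x => by rw [count_col2, count_col2, h]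
  have c3 : (Finsupp.toMultiset a).map (·.2.2) = (Finsupp.toMultiset a').map (·.2.2) :=
    Multiset.ext.mpr fun x => by rw [count_col3, count_col3, h]
  have := connect (k := k) (Finsupp.toMultiset a') (Finsupp.toMultiset a) c1 c2 c3
  simp only [qm] at this
  rw [Pm_toMultiset, Pm_toMultiset] at this
  exact Ideal.Quotient.eq.mp this

variable (k r m n)

/-- The monomial map. -/
def phiH : MvPolynomial (Fin r × Fin m × Fin n) k →ₐ[k] MvPolynomial (Fin r ⊕ Fin m ⊕ Fin n) k :=
  aeval fun t => X (inl t.1) * X (inr (inl t.2.1)) * X (inr (inr t.2.2))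

variable {k r m n}

lemma phiH_monomial (a : (Fin r × Fin m × Fin n) →₀ ℕ) (c : k) :
    phiH k r m n (monomial a c) = monomial (piH r m n a) c := by
  rw [phiH, aeval_monomial]
  have key : (a.prod fun t e =>
      ((X (inl t.1) * X (inr (inl t.2.1)) * X (inr (inr t.2.2)) :
        MvPolynomial (Fin r ⊕ Fin m ⊕ Fin n) k)) ^ e) = monomial (piH r m n a) 1 := by
    induction a using Finsupp.induction with
    | zero => simp [monomial_zero', C_1]
    | single_add t e f ht he ih =>
      rw [Finsupp.prod_add_index' (fun _ => pow_zero _) (fun _ _ _ => pow_add _ _ _),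
        Finsupp.prod_single_index
          (h := fun (t' : Fin r × Fin m × Fin n) e' => ((X (inl t'.1) * X (inr (inl t'.2.1)) * X (inr (inr t'.2.2)) :
            MvPolynomial (Fin r ⊕ Fin m ⊕ Fin n) k)) ^ e') (pow_zero _),
        ih, map_add, piH_single, mul_pow, mul_pow, X_pow_eq_monomial, X_pow_eq_monomial,
        X_pow_eq_monomial, monomial_mul, monomial_mul, monomial_mul, one_mul, one_mul, one_mul]
  rw [key, algebraMap_eq, C_mul_monomial, mul_one]

lemma I0_le_ker : I0 k r m n ≤ RingHom.ker (phiH k r m n) := by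
  rw [I0, Ideal.span_le]
  rintro p (⟨l, i, j, l', i', j', rfl⟩ | ⟨l, i, j, l', i', j', rfl⟩) <;>
  · simp only [SetLike.mem_coe, RingHom.mem_ker, map_sub, map_mul, phiH, aeval_X]
    ring

lemma ker_le_I0 : RingHom.ker (phiH k r m n) ≤ I0 k r m n := by
  classical
  intro f hf
  rw [RingHom.mem_ker] at hf
  set rep : ((Fin r ⊕ Fin m ⊕ Fin n) →₀ ℕ) → ((Fin r × Fin m × Fin n) →₀ ℕ) :=
    fun d => if h : ∃ b, piH r m n b = d then h.choose else 0 with hrep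
  set N : ((Fin r × Fin m × Fin n) →₀ ℕ) → ((Fin r × Fin m × Fin n) →₀ ℕ) :=
    fun a => rep (piH r m n a) with hNdef
  have hπN : ∀ a, piH r m n (N a) = piH r m n a := by
    intro a
    have h : ∃ b, piH r m n b = piH r m n a := ⟨a, rfl⟩
    simp only [hNdef, hrep, dif_pos h]
    exact h.choose_spec
  have hNfib : ∀ a a', piH r m n a = piH r m n a' → N a = N a' := by
    intro a a' h
    simp only [hNdef, h]
  set g := ∑ a ∈ f.support, monomial (N a) (coeff a f) with hg
  have hfg : f - g ∈ I0 k r m n := by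
    have key : f - g = ∑ a ∈ f.support, (monomial a (coeff a f) - monomial (N a) (coeff a f)) := by
      rw [Finset.sum_sub_distrib, ← hg]
      congr 1
      exact f.as_sum
    rw [key]
    refine Ideal.sum_mem _ fun a _ => ?_
    have : (monomial a (coeff a f) : MvPolynomial (Fin r × Fin m × Fin n) k)
        - monomial (N a) (coeff a f)
        = C (coeff a f) * ((monomial a 1) - monomial (N a) 1) := by
      rw [mul_sub, C_mul_monomial, C_mul_monomial, mul_one]
    rw [this]
    exact Ideal.mul_mem_left _ _ (monomial_sub_mem (hπN a).symm)
  have hcoeffs : ∀ d, (∑ a ∈ f.support, if piH r m n a = d then coeff a f else 0) = 0 := by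
    intro d
    have h0 : coeff d (phiH k r m n f) = 0 := by rw [hf, coeff_zero]
    rw [f.as_sum, map_sum] at h0
    simp only [phiH_monomial, coeff_sum, coeff_monomial] at h0
    exact h0
  have hg0 : g = 0 := by
    apply MvPolynomial.ext
    intro b
    rw [hg, coeff_sum, coeff_zero]
    simp only [coeff_monomial]
    by_cases hb : ∃ a₀ ∈ f.support, N a₀ = b
    · obtain ⟨a₀, ha₀s, ha₀⟩ := hb
      have : (∑ a ∈ f.support, if N a = b then coeff a f else 0)
          = ∑ a ∈ f.support, if piH r m n a = piH r m n a₀ then coeff a f else 0 := by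
        refine Finset.sum_congr rfl fun a _ => ?_
        congr 1
        apply propext
        constructor
        · intro h
          rw [← hπN a, ← hπN a₀]
          rw [h, ha₀]
        · intro h
          rw [hNfib a a₀ h, ha₀]
      rw [this, hcoeffs]
    · refine Finset.sum_eq_zero fun a ha => ?_
      rw [if_neg fun h => hb ⟨a, ha, h⟩]
  rwa [hg0, sub_zero] at hfg

end TDDaux

end TDDaux

/-- The ideal generated by all 2×2 minors of a matrix. -/
def minors2 {R : Type*} [CommRing R] {α β : Type*} (M : Matrix α β R) : Ideal R :=
  Ideal.span { p | ∃ i i' j j', p = M i j * M i' j' - M i j' * M i' j }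

/-- The toric double determinantal ideal `I = I₂(H) + I₂(V)` is prime.  Here the
variables `x^ℓ_{ij}` are indexed by `Fin r × Fin m × Fin n`, `H` is the `m × rn`
horizontal concatenation of the `r` generic `m × n` matrices, and `V` is their
`rm × n` vertical concatenation. -/
theorem toric_double_determinantal_isPrime (k : Type*) [Field k] (r m n : ℕ)
    (hr : 2 ≤ r) (hm : 2 ≤ m) (hn : 2 ≤ n)
    (H : Matrix (Fin m) (Fin r × Fin n) (MvPolynomial (Fin r × Fin m × Fin n) k))
    (V : Matrix (Fin r × Fin m) (Fin n) (MvPolynomial (Fin r × Fin m × Fin n) k))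
    (hH : ∀ i q, H i q = MvPolynomial.X (q.1, i, q.2))
    (hV : ∀ p j, V p j = MvPolynomial.X (p.1, p.2, j)) :
    (minors2 H + minors2 V).IsPrime := by
  classical
  have hIH : minors2 H = Ideal.span (TDDaux.SH k r m n) := by
    apply le_antisymm
    · rw [minors2, Ideal.span_le]
      rintro p ⟨i, i', ⟨l, j⟩, ⟨l', j'⟩, rfl⟩
      rw [hH, hH, hH, hH]
      exact Ideal.subset_span ⟨l, i, j, l', i', j', by dsimp only; ring⟩
    · rw [Ideal.span_le]
      rintro p ⟨l, i, j, l', i', j', rfl⟩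
      refine Ideal.subset_span ⟨i, i', (l, j), (l', j'), ?_⟩
      rw [hH, hH, hH, hH]; dsimp only; ring
  have hIV : minors2 V = Ideal.span (TDDaux.SV k r m n) := by
    apply le_antisymm
    · rw [minors2, Ideal.span_le]
      rintro p ⟨⟨l, i⟩, ⟨l', i'⟩, j, j', rfl⟩
      rw [hV, hV, hV, hV]
      exact Ideal.subset_span ⟨l, i, j, l', i', j', by dsimp only⟩
    · rw [Ideal.span_le]
      rintro p ⟨l, i, j, l', i', j', rfl⟩
      refine Ideal.subset_span ⟨(l, i), (l', i'), j, j', ?_⟩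
      rw [hV, hV, hV, hV]
  have hI0 : minors2 H + minors2 V = TDDaux.I0 k r m n := by
    rw [hIH, hIV, TDDaux.I0, Ideal.span_union, Submodule.add_eq_sup]
  have hker : TDDaux.I0 k r m n = RingHom.ker (TDDaux.phiH k r m n) :=
    le_antisymm TDDaux.I0_le_ker TDDaux.ker_le_I0
  rw [hI0, hker]
  exact RingHom.ker_isPrime _
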